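/- Let n ≥ 1 be an integer and N = 2^n. Then: (i) every column of 𝒮 has Hamming weight exactly n; (ii) for every subset A ⊆ {1,…,N} with |A| ≥ 2, the coordinatewise OR ⋁_{j∈A} 𝒮_j has Hamming weight at least n + 1; and consequently (iii) for every A ⊆ {1,…,N}, the coordinatewise OR ⋁_{j∈A} 𝒮_j has Hamming weight exactly n if and only if |A| = 1. -/

import Mathlib

/-- The `2n × 2^n` measurement matrix `𝒮`: the column indexed by `j : Fin (2^n)`
(i.e. the `(j+1)`-st column) consists of the `n`-bit binary representation of the
integer `j` followed by its bitwise complement. -/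
def Smat (n : ℕ) (i : Fin (2 * n)) (j : Fin (2 ^ n)) : Bool :=
  if (i : ℕ) < n then (j : ℕ).testBit (i : ℕ) else !((j : ℕ).testBit ((i : ℕ) - n))

/-- For `N = 2^n`:
(i) every column of `𝒮` has Hamming weight exactly `n`;
(ii) for every set `A` of at least two column indices, the coordinatewise OR of the
columns `𝒮_j`, `j ∈ A`, has Hamming weight at least `n + 1`;
(iii) consequently, for every set `A` of column indices, the coordinatewise OR of the
columns `𝒮_j`, `j ∈ A`, has Hamming weight exactly `n` iff `|A| = 1`. -/
lemma col_card (n : ℕ) (j : Fin (2 ^ n)) :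
    (Finset.univ.filter fun i : Fin (2 * n) => Smat n i j = true).card = n := by
  rw [Finset.card_filter]
  simp only [Smat]
  erw [Fin.sum_univ_eq_sum_range (fun i =>
    if (if i < n then (j : ℕ).testBit i else !((j : ℕ).testBit (i - n))) = true then 1 else 0)]
  rw [two_mul, Finset.sum_range_add]
  have h1 : ∀ i ∈ Finset.range n,
      (if (if i < n then (j : ℕ).testBit i else !((j : ℕ).testBit (i - n))) = true then 1 else 0)
      = (if (j : ℕ).testBit i = true then 1 else 0) := by
    intro i hi
    rw [Finset.mem_range] at hi
    simp [hi]
  have h2 : ∀ i ∈ Finset.range n,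
      (if (if n + i < n then (j : ℕ).testBit (n + i) else !((j : ℕ).testBit (n + i - n))) = true then 1 else 0)
      = (if (j : ℕ).testBit i = true then 0 else 1) := by
    intro i hi
    have h' : ¬ (n + i < n) := by omega
    cases hb : (j : ℕ).testBit i <;> simp [h', hb]
  rw [Finset.sum_congr rfl h1, Finset.sum_congr rfl h2, ← Finset.sum_add_distrib]
  have : ∀ i ∈ Finset.range n,
      ((if (j : ℕ).testBit i = true then 1 else 0) + (if (j : ℕ).testBit i = true then 0 else 1)) = 1 := by
    intro i _; by_cases h : (j : ℕ).testBit i = true <;> simp [h]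
  rw [Finset.sum_congr rfl this, Finset.sum_const, Finset.card_range, smul_eq_mul, mul_one]

theorem stmt8 (n : ℕ) (hn : 1 ≤ n) :
    (∀ j : Fin (2 ^ n),
      (Finset.univ.filter fun i : Fin (2 * n) => Smat n i j = true).card = n) ∧
    (∀ A : Finset (Fin (2 ^ n)), 2 ≤ A.card →
      n + 1 ≤ (Finset.univ.filter fun i : Fin (2 * n) =>
        ∃ j ∈ A, Smat n i j = true).card) ∧
    (∀ A : Finset (Fin (2 ^ n)),
      ((Finset.univ.filter fun i : Fin (2 * n) =>
        ∃ j ∈ A, Smat n i j = true).card = n ↔ A.card = 1)) := by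
  have part2 : ∀ A : Finset (Fin (2 ^ n)), 2 ≤ A.card →
      n + 1 ≤ (Finset.univ.filter fun i : Fin (2 * n) =>
        ∃ j ∈ A, Smat n i j = true).card := by
    intro A hA
    obtain ⟨a, ha, b, hb, hab⟩ := Finset.one_lt_card.mp hA
    have hne : (a : ℕ) ≠ (b : ℕ) := fun h => hab (Fin.ext h)
    obtain ⟨k, hk⟩ : ∃ k, (a : ℕ).testBit k ≠ (b : ℕ).testBit k := by
      by_contra h
      push_neg at h
      exact hne (Nat.eq_of_testBit_eq h)
    have hkn : k < n := by
      by_contra h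
      push_neg at h
      have ha' : (a : ℕ).testBit k = false :=
        Nat.testBit_lt_two_pow (lt_of_lt_of_le a.isLt (Nat.pow_le_pow_right (by norm_num) h))
      have hb' : (b : ℕ).testBit k = false :=
        Nat.testBit_lt_two_pow (lt_of_lt_of_le b.isLt (Nat.pow_le_pow_right (by norm_num) h))
      exact hk (ha'.trans hb'.symm)
    set e : Fin (2 * n) := if (a : ℕ).testBit k then ⟨n + k, by omega⟩ else ⟨k, by omega⟩ with he
    have henot : e ∉ Finset.univ.filter fun i : Fin (2 * n) => Smat n i a = true := by
      simp only [Finset.mem_filter, Finset.mem_univ, true_and]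
      by_cases h : (a : ℕ).testBit k
      · simp [he, h, Smat, Nat.add_sub_cancel_left, show ¬ (n + k < n) by omega]
      · simp [he, h, Smat, hkn]
    have hein : e ∈ Finset.univ.filter fun i : Fin (2 * n) => ∃ j ∈ A, Smat n i j = true := by
      simp only [Finset.mem_filter, Finset.mem_univ, true_and]
      refine ⟨b, hb, ?_⟩
      by_cases h : (a : ℕ).testBit k
      · have hb' : (b : ℕ).testBit k = false := by
          cases hb' : (b : ℕ).testBit k
          · rfl
          · exact absurd (by rw [h, hb']) hk
        simp [he, h, Smat, Nat.add_sub_cancel_left, show ¬ (n + k < n) by omega, hb']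
      · have hb' : (b : ℕ).testBit k = true := by
          cases hb' : (b : ℕ).testBit k
          · exact absurd ((Bool.eq_false_iff.mpr h).trans hb'.symm) hk
          · rfl
        simp [he, h, Smat, hkn, hb']
    have hsub : insert e (Finset.univ.filter fun i : Fin (2 * n) => Smat n i a = true)
        ⊆ Finset.univ.filter fun i : Fin (2 * n) => ∃ j ∈ A, Smat n i j = true := by
      intro x hx
      rcases Finset.mem_insert.mp hx with rfl | hx
      · exact hein
      · simp only [Finset.mem_filter, Finset.mem_univ, true_and] at hx ⊢
        exact ⟨a, ha, hx⟩
    calc n + 1 = (insert e (Finset.univ.filter fun i : Fin (2 * n) => Smat n i a = true)).card := by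
            rw [Finset.card_insert_of_notMem henot, col_card]
      _ ≤ _ := Finset.card_le_card hsub
  refine ⟨col_card n, part2, ?_⟩
  intro A
  constructor
  · intro h
    rcases Nat.lt_or_ge A.card 2 with h2 | h2
    · have hc0 : A.card = 0 ∨ A.card = 1 := by omega
      rcases hc0 with hc | hc
      · rw [Finset.card_eq_zero] at hc
        subst hc
        simp at h
        omega
      · exact hc
    · have := part2 A h2
      omega
  · intro h
    obtain ⟨a, rfl⟩ := Finset.card_eq_one.mp h
    simp only [Finset.mem_singleton, exists_eq_left]
    exact col_card n a
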